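/- For every rational number r > 0 and every prime p such that all primes dividing the numerator or denominator of r are at most p, there exist positive integers m and n such that r = φ(m²)/φ(n²) and every prime factor of m·n is at most p. -/

import Mathlib

/-- Adjust `p`-adic exponents: given `β ≤ α`, find exponents `a' b'` for the `p`-parts
of `m` and `n` so that `p^α * φ(p^(2b'))` and `p^β * φ(p^(2a'))` agree up to
factors `X, Y` supported on primes `< p`. -/
lemma exp_adjust (p : ℕ) (hp : p.Prime) (α β : ℕ) (h : β ≤ α) :
    ∃ a' b' X Y t : ℕ, 0 < X ∧ 0 < Y ∧
      (∀ q : ℕ, q.Prime → q ∣ X * Y → q < p) ∧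
      p ^ α * Nat.totient (p ^ (2 * b')) = p ^ t * X ∧
      p ^ β * Nat.totient (p ^ (2 * a')) = p ^ t * Y := by
  have hp2 := hp.two_le
  have hp1 : 0 < p - 1 := by omega
  have hXY : ∀ X Y : ℕ, X ∣ p - 1 → Y ∣ p - 1 →
      (∀ q : ℕ, q.Prime → q ∣ X * Y → q < p) := by
    intro X Y hX hY q hq hqd
    have : q ∣ p - 1 := by
      rcases (Nat.Prime.dvd_mul hq).mp hqd with h' | h'
      · exact h'.trans hX
      · exact h'.trans hY
    have := Nat.le_of_dvd hp1 this
    omega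
  set d := α - β with hd
  have hβd : β + d = α := by omega
  rcases Nat.even_or_odd d with he | ho
  · -- d even : a' = d/2 + 1, b' = 1, t = α + 1
    obtain ⟨k, hk⟩ := he
    refine ⟨d / 2 + 1, 1, p - 1, p - 1, α + 1, hp1, hp1, hXY _ _ dvd_rfl dvd_rfl, ?_, ?_⟩
    · rw [Nat.totient_prime_pow hp (by norm_num)]
      have : 2 * 1 - 1 = 1 := by norm_num
      rw [this, pow_add, pow_one]
      ring
    · have h2 : 2 * (d / 2 + 1) = d + 2 := by omega
      rw [h2, Nat.totient_prime_pow hp (by omega)]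
      have h3 : d + 2 - 1 = d + 1 := by omega
      rw [h3, ← mul_assoc, ← pow_add, show β + (d + 1) = α + 1 by omega]
  · -- d odd : a' = (d+1)/2, b' = 0, t = α
    refine ⟨(d + 1) / 2, 0, 1, p - 1, α, one_pos, hp1, hXY _ _ (one_dvd _) dvd_rfl, ?_, ?_⟩
    · simp
    · have h2 : 2 * ((d + 1) / 2) = d + 1 := by
        rcases ho with ⟨k, hk⟩; omega
      rw [h2, Nat.totient_prime_pow hp (by omega)]
      have h3 : d + 1 - 1 = d := by omega
      rw [h3, ← mul_assoc, ← pow_add, hβd]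

/-- The inductive step at the prime `p = P + 1`, assuming the `p`-adic valuation of `b`
is at most that of `a`. -/
lemma step (P : ℕ) (hp : (P + 1).Prime)
    (IH : ∀ a b : ℕ, 0 < a → 0 < b → (∀ q, q.Prime → q ∣ a * b → q ≤ P) →
      ∃ m n : ℕ, 0 < m ∧ 0 < n ∧ a * Nat.totient (n ^ 2) = b * Nat.totient (m ^ 2) ∧
        ∀ q, q.Prime → q ∣ m * n → q ≤ P)
    (a b : ℕ) (ha : 0 < a) (hb : 0 < b)
    (hfac : ∀ q, q.Prime → q ∣ a * b → q ≤ P + 1)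
    (hβα : b.factorization (P + 1) ≤ a.factorization (P + 1)) :
    ∃ m n : ℕ, 0 < m ∧ 0 < n ∧ a * Nat.totient (n ^ 2) = b * Nat.totient (m ^ 2) ∧
      ∀ q, q.Prime → q ∣ m * n → q ≤ P + 1 := by
  set p := P + 1 with hpdef
  set α := a.factorization p with hα
  set β := b.factorization p with hβ
  set a₀ := a / p ^ α with ha₀def
  set b₀ := b / p ^ β with hb₀def
  have haeq : p ^ α * a₀ = a := Nat.ordProj_mul_ordCompl_eq_self a p
  have hbeq : p ^ β * b₀ = b := Nat.ordProj_mul_ordCompl_eq_self b p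
  have hpa₀ : ¬ p ∣ a₀ := Nat.not_dvd_ordCompl hp ha.ne'
  have hpb₀ : ¬ p ∣ b₀ := Nat.not_dvd_ordCompl hp hb.ne'
  have ha₀ : 0 < a₀ := Nat.ordCompl_pos p ha.ne'
  have hb₀ : 0 < b₀ := Nat.ordCompl_pos p hb.ne'
  obtain ⟨a', b', X, Y, t, hX, hY, hXYlt, hadj1, hadj2⟩ := exp_adjust p hp α β hβα
  -- apply induction hypothesis to a₀ * X and b₀ * Y
  have hsmall : ∀ q, q.Prime → q ∣ (a₀ * X) * (b₀ * Y) → q ≤ P := by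
    intro q hq hqd
    have h4 : q ∣ a₀ ∨ q ∣ X ∨ q ∣ b₀ ∨ q ∣ Y := by
      rcases (hq.dvd_mul).mp hqd with h' | h'
      · rcases (hq.dvd_mul).mp h' with h'' | h''
        · exact Or.inl h''
        · exact Or.inr (Or.inl h'')
      · rcases (hq.dvd_mul).mp h' with h'' | h''
        · exact Or.inr (Or.inr (Or.inl h''))
        · exact Or.inr (Or.inr (Or.inr h''))
    rcases h4 with h' | h' | h' | h'
    · have hqa : q ∣ a := h'.trans (Nat.ordCompl_dvd a p)
      have := hfac q hq (hqa.trans (dvd_mul_right a b))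
      have hqp : q ≠ p := fun he => hpa₀ (he ▸ h')
      omega
    · have := hXYlt q hq (h'.trans (dvd_mul_right X Y))
      omega
    · have hqb : q ∣ b := h'.trans (Nat.ordCompl_dvd b p)
      have := hfac q hq (hqb.trans (dvd_mul_left b a))
      have hqp : q ≠ p := fun he => hpb₀ (he ▸ h')
      omega
    · have := hXYlt q hq (Dvd.dvd.mul_left h' X)
      omega
  obtain ⟨m₀, n₀, hm₀, hn₀, heq₀, hbd₀⟩ :=
    IH (a₀ * X) (b₀ * Y) (Nat.mul_pos ha₀ hX) (Nat.mul_pos hb₀ hY) hsmall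
  refine ⟨p ^ a' * m₀, p ^ b' * n₀, Nat.mul_pos (Nat.pow_pos hp.pos) hm₀,
    Nat.mul_pos (Nat.pow_pos hp.pos) hn₀, ?_, ?_⟩
  · -- main equation
    have hcm : Nat.Coprime (p ^ (2 * a')) (m₀ ^ 2) := by
      apply Nat.Coprime.pow
      rw [hp.coprime_iff_not_dvd]
      intro hd
      have := hbd₀ p hp (hd.trans (dvd_mul_right m₀ n₀))
      omega
    have hcn : Nat.Coprime (p ^ (2 * b')) (n₀ ^ 2) := by
      apply Nat.Coprime.pow
      rw [hp.coprime_iff_not_dvd]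
      intro hd
      have := hbd₀ p hp (Dvd.dvd.mul_left hd m₀)
      omega
    have hm2 : (p ^ a' * m₀) ^ 2 = p ^ (2 * a') * m₀ ^ 2 := by
      rw [mul_pow, ← pow_mul, mul_comm a' 2]
    have hn2 : (p ^ b' * n₀) ^ 2 = p ^ (2 * b') * n₀ ^ 2 := by
      rw [mul_pow, ← pow_mul, mul_comm b' 2]
    rw [hm2, hn2, Nat.totient_mul hcm, Nat.totient_mul hcn]
    calc a * (Nat.totient (p ^ (2 * b')) * Nat.totient (n₀ ^ 2))
        = (p ^ α * Nat.totient (p ^ (2 * b'))) * (a₀ * Nat.totient (n₀ ^ 2)) := by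
          rw [← haeq]; ring
      _ = p ^ t * ((a₀ * X) * Nat.totient (n₀ ^ 2)) := by rw [hadj1]; ring
      _ = p ^ t * ((b₀ * Y) * Nat.totient (m₀ ^ 2)) := by rw [heq₀]
      _ = (p ^ β * Nat.totient (p ^ (2 * a'))) * (b₀ * Nat.totient (m₀ ^ 2)) := by
          rw [hadj2]; ring
      _ = b * (Nat.totient (p ^ (2 * a')) * Nat.totient (m₀ ^ 2)) := by
          rw [← hbeq]; ring
  · -- prime bound
    intro q hq hqd
    have h4 : q ∣ p ^ a' * p ^ b' ∨ q ∣ m₀ * n₀ := by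
      have : p ^ a' * m₀ * (p ^ b' * n₀) = (p ^ a' * p ^ b') * (m₀ * n₀) := by ring
      rw [this] at hqd
      exact (hq.dvd_mul).mp hqd
    rcases h4 with h' | h'
    · rcases (hq.dvd_mul).mp h' with h'' | h'' <;>
      · have := (Nat.Prime.dvd_of_dvd_pow hq h'')
        have := (Nat.prime_dvd_prime_iff_eq hq hp).mp this
        omega
    · exact (hbd₀ q hq h').trans (by omega)

/-- The main lemma: positive naturals with prime factors at most `P` give a totient
square ratio with prime factors at most `P`. -/
lemma main_lemma (P : ℕ) : ∀ a b : ℕ, 0 < a → 0 < b →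
    (∀ q, q.Prime → q ∣ a * b → q ≤ P) →
    ∃ m n : ℕ, 0 < m ∧ 0 < n ∧ a * Nat.totient (n ^ 2) = b * Nat.totient (m ^ 2) ∧
      ∀ q, q.Prime → q ∣ m * n → q ≤ P := by
  induction P with
  | zero =>
    intro a b ha hb hfac
    have hab : a * b = 1 := by
      by_contra h
      have h1 : 1 < a * b := by
        have := Nat.mul_pos ha hb
        omega
      obtain ⟨q, hq, hqd⟩ := Nat.exists_prime_and_dvd (by omega : a * b ≠ 1)
      have := hfac q hq hqd
      have := hq.two_le
      omega
    have ha1 : a = 1 := Nat.dvd_one.mp (hab ▸ dvd_mul_right a b)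
    have hb1 : b = 1 := Nat.dvd_one.mp (hab ▸ dvd_mul_left b a)
    refine ⟨1, 1, one_pos, one_pos, by simp [ha1, hb1], ?_⟩
    intro q hq hqd
    simp only [mul_one, Nat.dvd_one] at hqd
    exact absurd hqd hq.one_lt.ne'
  | succ P IH =>
    intro a b ha hb hfac
    by_cases hp : (P + 1).Prime
    · rcases le_total (b.factorization (P + 1)) (a.factorization (P + 1)) with h | h
      · exact step P hp IH a b ha hb hfac h
      · obtain ⟨m, n, hm, hn, heq, hbd⟩ := step P hp IH b a hb ha
          (fun q hq hqd => hfac q hq (by rwa [mul_comm])) h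
        exact ⟨n, m, hn, hm, heq.symm, fun q hq hqd => hbd q hq (by rwa [mul_comm])⟩
    ·
      obtain ⟨m, n, hm, hn, heq, hbd⟩ := IH a b ha hb (by
        intro q hq hqd
        have := hfac q hq hqd
        have : q ≠ P + 1 := fun he => hp (he ▸ hq)
        omega)
      exact ⟨m, n, hm, hn, heq, fun q hq hqd => (hbd q hq hqd).trans (by omega)⟩

theorem stmt7 (r : ℚ) (hr : 0 < r) (p : ℕ) (hp : p.Prime)
    (hfac : ∀ s : ℕ, s.Prime → (s ∣ r.num.natAbs ∨ s ∣ r.den) → s ≤ p) :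
    ∃ m n : ℕ, 0 < m ∧ 0 < n ∧
      r = (Nat.totient (m ^ 2) : ℚ) / (Nat.totient (n ^ 2) : ℚ) ∧
      ∀ s : ℕ, s.Prime → s ∣ m * n → s ≤ p := by
  set a := r.num.natAbs with hadef
  set b := r.den with hbdef
  have hnum : 0 < r.num := Rat.num_pos.mpr hr
  have ha : 0 < a := Int.natAbs_pos.mpr hnum.ne'
  have hb : 0 < b := r.pos
  obtain ⟨m, n, hm, hn, heq, hbd⟩ := main_lemma p a b ha hb
    (fun q hq hqd => hfac q hq ((hq.dvd_mul).mp hqd))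
  refine ⟨m, n, hm, hn, ?_, hbd⟩
  have hφn : 0 < Nat.totient (n ^ 2) := Nat.totient_pos.mpr (by positivity)
  have key : (a : ℚ) * (Nat.totient (n ^ 2) : ℚ) = (b : ℚ) * (Nat.totient (m ^ 2) : ℚ) := by
    exact_mod_cast heq
  have haq : (a : ℚ) = (r.num : ℚ) := by
    have : (a : ℤ) = r.num := Int.natAbs_of_nonneg hnum.le
    exact_mod_cast this
  have hr' : r = (a : ℚ) / (b : ℚ) := by
    rw [haq]; exact (Rat.num_div_den r).symm
  rw [hr', div_eq_div_iff (by exact_mod_cast hb.ne') (by exact_mod_cast hφn.ne')]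
  linarith [key]
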